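/- Let $\nu : \mathbb{R}_- \to \mathbb{R}_+$ be increasing with $\nu(\theta) = u(\theta)/(-\theta)$, where $u : \mathbb{R}_- \to \mathbb{R}_{>0}$ satisfies $0 < \liminf_{\theta \to 0^-} u(\theta) \leq \limsup_{\theta \to 0^-} u(\theta) < \infty$. Let $c(\theta) = -\theta$ have distribution (under a probability measure $\lambda$ on $\mathbb{R}_-$) with $f = \lim_{\varepsilon \to 0} \Pr_\lambda(c < \varepsilon)/\varepsilon$ existing in $[0,\infty]$. Then $u_-(0) \cdot f \leq \liminf_{v \to \infty} v \Pr_\lambda(\nu > v) \leq \limsup_{v \to \infty} v \Pr_\lambda(\nu > v) \leq u_+(0) \cdot f$, where $u_-(0) = \liminf_{\theta \to 0^-} u(\theta)$ and $u_+(0) = \limsup_{\theta \to 0^-} u(\theta)$. -/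

import Mathlib

open MeasureTheory Filter Set
open scoped ENNReal

private lemma aux_mul (c v : ℝ) (hc : 0 < c) (hv : 0 < v) (x : ℝ≥0∞) :
    ENNReal.ofReal c * (x / ENNReal.ofReal (c / v)) = ENNReal.ofReal v * x := by
  have hC0 : ENNReal.ofReal c ≠ 0 := (ENNReal.ofReal_pos.2 hc).ne'
  have hV0 : ENNReal.ofReal v ≠ 0 := (ENNReal.ofReal_pos.2 hv).ne'
  rw [ENNReal.ofReal_div_of_pos hv, div_eq_mul_inv x,
    ENNReal.inv_div (Or.inl ENNReal.ofReal_ne_top) (Or.inl hV0),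
    div_eq_mul_inv]
  have h1 : ENNReal.ofReal c * (ENNReal.ofReal c)⁻¹ = 1 :=
    ENNReal.mul_inv_cancel hC0 ENNReal.ofReal_ne_top
  calc ENNReal.ofReal c * (x * (ENNReal.ofReal v * (ENNReal.ofReal c)⁻¹))
      = (ENNReal.ofReal c * (ENNReal.ofReal c)⁻¹) * (ENNReal.ofReal v * x) := by ring
    _ = ENNReal.ofReal v * x := by rw [h1, one_mul]


/-- with ordered types, `ν(θ) = u(θ)/(-θ)` increasing on `ℝ₋`, `u` bounded
above and away from `0` near `0⁻`, and `f = lim_{ε→0} Pr(c < ε)/ε ∈ [0,∞]` (here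
`c(θ) = -θ`), the tail of `ν` satisfies
`u₋(0) f ≤ liminf_{v→∞} v Pr(ν > v) ≤ limsup_{v→∞} v Pr(ν > v) ≤ u₊(0) f`. -/
theorem stmt13 (μ : Measure ℝ) [IsProbabilityMeasure μ] (hsupp : μ {θ | 0 ≤ θ} = 0)
    (u : ℝ → ℝ) (hu : ∀ θ < 0, 0 < u θ)
    (ν : ℝ → ℝ) (hν : ∀ θ < 0, ν θ = u θ / (-θ)) (hmono : MonotoneOn ν (Iio 0))
    (uminus uplus : ℝ)
    (hbdd : ∃ M : ℝ, ∀ᶠ θ in nhdsWithin 0 (Iio 0), |u θ| ≤ M)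
    (hliminf : uminus = Filter.liminf u (nhdsWithin 0 (Iio 0)))
    (hlimsup : uplus = Filter.limsup u (nhdsWithin 0 (Iio 0)))
    (hpos : 0 < uminus)
    (f : ℝ≥0∞)
    (hf : Tendsto (fun ε : ℝ => μ {θ | -θ < ε} / ENNReal.ofReal ε)
      (nhdsWithin 0 (Ioi 0)) (nhds f)) :
    ENNReal.ofReal uminus * f ≤
        Filter.liminf (fun v : ℝ => ENNReal.ofReal v * μ {θ | θ < 0 ∧ v < ν θ}) atTop ∧
      Filter.limsup (fun v : ℝ => ENNReal.ofReal v * μ {θ | θ < 0 ∧ v < ν θ}) atTop ≤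
        ENNReal.ofReal uplus * f := by
  obtain ⟨M, hM⟩ := hbdd
  have hbdd_le : IsBoundedUnder (· ≤ ·) (nhdsWithin (0:ℝ) (Iio 0)) u :=
    ⟨M, eventually_map.2 (by filter_upwards [hM] with θ h; exact (abs_le.1 h).2)⟩
  have hbdd_ge : IsBoundedUnder (· ≥ ·) (nhdsWithin (0:ℝ) (Iio 0)) u :=
    ⟨-M, eventually_map.2 (by filter_upwards [hM] with θ h; exact (abs_le.1 h).1)⟩
  have hle : uminus ≤ uplus := by
    rw [hliminf, hlimsup]; exact liminf_le_limsup hbdd_le hbdd_ge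
  have huplus : 0 < uplus := lt_of_lt_of_le hpos hle
  -- tendsto of c/v to 0 within Ioi 0
  have hdiv : ∀ c : ℝ, 0 < c →
      Tendsto (fun v : ℝ => c / v) atTop (nhdsWithin 0 (Ioi 0)) := by
    intro c hc
    refine tendsto_nhdsWithin_of_tendsto_nhds_of_eventually_within _
      ((tendsto_id.const_div_atTop c)) ?_
    filter_upwards [eventually_gt_atTop 0] with v hv
    exact div_pos hc hv
  -- upper bound
  have upper : ∀ ε : ℝ, 0 < ε →
      Filter.limsup (fun v : ℝ => ENNReal.ofReal v * μ {θ | θ < 0 ∧ v < ν θ}) atTop ≤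
        ENNReal.ofReal (uplus + ε) * f := by
    intro ε hε
    have hev : ∀ᶠ θ in nhdsWithin (0:ℝ) (Iio 0), u θ < uplus + ε :=
      eventually_lt_of_limsup_lt (by rw [← hlimsup]; linarith) hbdd_le
    obtain ⟨a, ha, hsub⟩ := mem_nhdsLT_iff_exists_Ioo_subset.1 hev
    set c := uplus + ε with hc
    have hcpos : 0 < c := by linarith
    have hevv : ∀ᶠ v in atTop, ENNReal.ofReal v * μ {θ | θ < 0 ∧ v < ν θ} ≤
        ENNReal.ofReal c * (μ {θ | -θ < c / v} / ENNReal.ofReal (c / v)) := by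
      filter_upwards [eventually_gt_atTop 0, eventually_ge_atTop (ν a)] with v hv0 hva
      have hsubset : {θ | θ < 0 ∧ v < ν θ} ⊆ {θ | -θ < c / v} := by
        rintro θ ⟨hθ0, hθv⟩
        by_cases haθ : θ ≤ a
        · exact absurd hθv (not_lt.2 (le_trans (hmono hθ0 ha haθ) hva))
        push_neg at haθ
        have huθ : u θ < c := hsub ⟨haθ, hθ0⟩
        have hθpos : 0 < -θ := neg_pos.2 hθ0
        have h2 : v * (-θ) < u θ := (lt_div_iff₀ hθpos).1 (by rwa [hν θ hθ0] at hθv)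
        have h1 : -θ < u θ / v := (lt_div_iff₀ hv0).2 (by linarith [mul_comm v (-θ)])
        refine h1.trans_le ?_; gcongr
      calc ENNReal.ofReal v * μ {θ | θ < 0 ∧ v < ν θ}
          ≤ ENNReal.ofReal v * μ {θ | -θ < c / v} := by
            exact mul_le_mul_right (measure_mono hsubset) _
        _ = ENNReal.ofReal c * (μ {θ | -θ < c / v} / ENNReal.ofReal (c / v)) :=
            (aux_mul c v hcpos hv0 _).symm
    have htend : Tendsto
        (fun v : ℝ => ENNReal.ofReal c * (μ {θ | -θ < c / v} / ENNReal.ofReal (c / v)))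
        atTop (nhds (ENNReal.ofReal c * f)) :=
      ENNReal.Tendsto.const_mul (hf.comp (hdiv c hcpos)) (Or.inr ENNReal.ofReal_ne_top)
    calc Filter.limsup (fun v : ℝ => ENNReal.ofReal v * μ {θ | θ < 0 ∧ v < ν θ}) atTop
        ≤ Filter.limsup
            (fun v : ℝ => ENNReal.ofReal c * (μ {θ | -θ < c / v} / ENNReal.ofReal (c / v)))
            atTop := limsup_le_limsup hevv
      _ = ENNReal.ofReal c * f := htend.limsup_eq
  -- lower bound
  have lower : ∀ ε : ℝ, 0 < ε → ε < uminus →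
      ENNReal.ofReal (uminus - ε) * f ≤
        Filter.liminf (fun v : ℝ => ENNReal.ofReal v * μ {θ | θ < 0 ∧ v < ν θ}) atTop := by
    intro ε hε hεu
    have hev : ∀ᶠ θ in nhdsWithin (0:ℝ) (Iio 0), uminus - ε < u θ :=
      eventually_lt_of_lt_liminf (by rw [← hliminf]; linarith) hbdd_ge
    obtain ⟨a, ha, hsub⟩ := mem_nhdsLT_iff_exists_Ioo_subset.1 hev
    set c := uminus - ε with hc
    have hcpos : 0 < c := by linarith
    have hevv : ∀ᶠ v in atTop,
        ENNReal.ofReal c * (μ {θ | -θ < c / v} / ENNReal.ofReal (c / v)) ≤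
          ENNReal.ofReal v * μ {θ | θ < 0 ∧ v < ν θ} := by
      filter_upwards [eventually_gt_atTop 0,
        ((tendsto_id.const_div_atTop c)).eventually
          (gt_mem_nhds (neg_pos.2 (show a < 0 from ha)))] with v hv0 hva
      have hsubset : {θ | -θ < c / v} ⊆ {θ | θ < 0 ∧ v < ν θ} ∪ {θ | 0 ≤ θ} := by
        intro θ hθ
        by_cases h0 : 0 ≤ θ
        · exact Or.inr h0
        push_neg at h0
        left
        have hθpos : 0 < -θ := neg_pos.2 h0
        have hθa : a < θ := by
          have : -θ < -a := lt_trans hθ hva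
          linarith
        have huθ : c < u θ := hsub ⟨hθa, h0⟩
        have h2 : v * (-θ) < c := by
          have := (lt_div_iff₀ hv0).1 hθ
          linarith [mul_comm (-θ) v]
        refine ⟨h0, ?_⟩
        rw [hν θ h0]
        exact (lt_div_iff₀ hθpos).2 (by linarith)
      have hmeas : μ {θ | -θ < c / v} ≤ μ {θ | θ < 0 ∧ v < ν θ} := by
        calc μ {θ | -θ < c / v} ≤ μ ({θ | θ < 0 ∧ v < ν θ} ∪ {θ | 0 ≤ θ}) :=
              measure_mono hsubset
          _ ≤ μ {θ | θ < 0 ∧ v < ν θ} + μ {θ | 0 ≤ θ} := measure_union_le _ _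
          _ = μ {θ | θ < 0 ∧ v < ν θ} := by rw [hsupp, add_zero]
      calc ENNReal.ofReal c * (μ {θ | -θ < c / v} / ENNReal.ofReal (c / v))
          = ENNReal.ofReal v * μ {θ | -θ < c / v} := aux_mul c v hcpos hv0 _
        _ ≤ ENNReal.ofReal v * μ {θ | θ < 0 ∧ v < ν θ} := mul_le_mul_right hmeas _
    have htend : Tendsto
        (fun v : ℝ => ENNReal.ofReal c * (μ {θ | -θ < c / v} / ENNReal.ofReal (c / v)))
        atTop (nhds (ENNReal.ofReal c * f)) :=
      ENNReal.Tendsto.const_mul (hf.comp (hdiv c hcpos)) (Or.inr ENNReal.ofReal_ne_top)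
    calc ENNReal.ofReal c * f
        = Filter.liminf
            (fun v : ℝ => ENNReal.ofReal c * (μ {θ | -θ < c / v} / ENNReal.ofReal (c / v)))
            atTop := htend.liminf_eq.symm
      _ ≤ Filter.liminf (fun v : ℝ => ENNReal.ofReal v * μ {θ | θ < 0 ∧ v < ν θ}) atTop :=
          liminf_le_liminf hevv
  constructor
  · -- uminus * f ≤ liminf
    have htend : Tendsto (fun ε : ℝ => ENNReal.ofReal (uminus - ε) * f)
        (nhdsWithin 0 (Ioi 0)) (nhds (ENNReal.ofReal uminus * f)) := by
      have h1 : Tendsto (fun ε : ℝ => uminus - ε) (nhdsWithin 0 (Ioi 0)) (nhds uminus) := by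
        have : Tendsto (fun ε : ℝ => uminus - ε) (nhds 0) (nhds (uminus - 0)) :=
          (continuous_const.sub continuous_id).tendsto 0
        simpa using this.mono_left nhdsWithin_le_nhds
      exact ENNReal.Tendsto.mul_const
        ((ENNReal.continuous_ofReal.tendsto uminus).comp h1)
        (Or.inl (ENNReal.ofReal_pos.2 hpos).ne')
    refine le_of_tendsto htend ?_
    filter_upwards [self_mem_nhdsWithin,
      eventually_nhdsWithin_of_eventually_nhds (gt_mem_nhds hpos)] with ε h1 h2
    exact lower ε h1 h2
  · have htend : Tendsto (fun ε : ℝ => ENNReal.ofReal (uplus + ε) * f)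
        (nhdsWithin 0 (Ioi 0)) (nhds (ENNReal.ofReal uplus * f)) := by
      have h1 : Tendsto (fun ε : ℝ => uplus + ε) (nhdsWithin 0 (Ioi 0)) (nhds uplus) := by
        have : Tendsto (fun ε : ℝ => uplus + ε) (nhds 0) (nhds (uplus + 0)) :=
          (continuous_const.add continuous_id).tendsto 0
        simpa using this.mono_left nhdsWithin_le_nhds
      exact ENNReal.Tendsto.mul_const
        ((ENNReal.continuous_ofReal.tendsto uplus).comp h1)
        (Or.inl (ENNReal.ofReal_pos.2 huplus).ne')
    refine ge_of_tendsto htend ?_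
    filter_upwards [self_mem_nhdsWithin] with ε hε
    exact upper ε hε
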